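/- Let n ≥ 4 be even and g ≥ 1. For every choice of signs ε₁, …, ε_{2g} ∈ {1, −1} and every δ ∈ {1, −1}, there exist matrices A₁, …, A_g, B₁, …, B_g ∈ O(n,ℝ) such that det(A_i) = ε_{2i−1} and det(B_i) = ε_{2i} for all i = 1, …, g, and the product of commutators satisfies ∏_{i=1}^{g} [A_i, B_i] = δ·I_n. -/

import Mathlib

open Matrix

namespace Stmt0Aux

/-! ### Sign diagonal matrices -/

noncomputable def sd (n : ℕ) (x : ℝ) : Matrix (Fin n) (Fin n) ℝ :=
  Matrix.diagonal (fun j => if (j : ℕ) = 0 then x else 1)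

lemma sd_transpose (n : ℕ) (x : ℝ) : (sd n x)ᵀ = sd n x :=
  Matrix.diagonal_transpose _

lemma sd_mul_self (n : ℕ) (x : ℝ) (hx : x * x = 1) : sd n x * sd n x = 1 := by
  rw [sd, Matrix.diagonal_mul_diagonal]
  have h : (fun i : Fin n => (if (i : ℕ) = 0 then x else 1) * if (i : ℕ) = 0 then x else 1)
      = fun _ => (1 : ℝ) := by
    funext j; split_ifs <;> simp [hx]
  rw [h, Matrix.diagonal_one]

lemma sd_orth (n : ℕ) (x : ℝ) (hx : x * x = 1) : (sd n x)ᵀ * sd n x = 1 := by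
  rw [sd_transpose]; exact sd_mul_self n x hx

lemma sd_inv (n : ℕ) (x : ℝ) (hx : x * x = 1) : (sd n x)⁻¹ = sd n x :=
  Matrix.inv_eq_left_inv (sd_mul_self n x hx)

lemma sd_det (n : ℕ) (x : ℝ) (hn : 0 < n) : (sd n x).det = x := by
  rw [sd, Matrix.det_diagonal]
  have h1 : ∀ j : Fin n, (if (j : ℕ) = 0 then x else 1)
      = (if j = (⟨0, hn⟩ : Fin n) then x else 1) := by
    intro j; simp [Fin.ext_iff]
  rw [Finset.prod_congr rfl (fun j _ => h1 j), Finset.prod_ite_eq']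
  simp

lemma sd_commutator (n : ℕ) (x y : ℝ) (hx : x * x = 1) (hy : y * y = 1) :
    sd n x * sd n y * (sd n x)⁻¹ * (sd n y)⁻¹ = 1 := by
  rw [sd_inv n x hx, sd_inv n y hy]
  simp only [sd, Matrix.diagonal_mul_diagonal]
  have h : (fun i : Fin n =>
      ((if (i : ℕ) = 0 then x else 1) * (if (i : ℕ) = 0 then y else 1)
        * (if (i : ℕ) = 0 then x else 1)) * (if (i : ℕ) = 0 then y else 1))
      = fun _ => (1 : ℝ) := by
    funext j
    split_ifs
    · have h2 : x * y * x * y = (x * x) * (y * y) := by ring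
      rw [h2, hx, hy, one_mul]
    · norm_num
  rw [h, Matrix.diagonal_one]

/-! ### 2×2 building blocks -/

noncomputable def J : Matrix (Fin 2) (Fin 2) ℝ := !![0,-1;1,0]
noncomputable def K : Matrix (Fin 2) (Fin 2) ℝ := !![1,0;0,-1]
noncomputable def S : Matrix (Fin 2) (Fin 2) ℝ := !![0,1;1,0]

lemma J_orth : Jᵀ * J = 1 := by
  ext i j; fin_cases i <;> fin_cases j <;>
    simp [J, Matrix.mul_apply, Fin.sum_univ_two, Matrix.transpose, Matrix.vecHead, Matrix.vecTail]

lemma K_orth : Kᵀ * K = 1 := by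
  ext i j; fin_cases i <;> fin_cases j <;>
    simp [K, Matrix.mul_apply, Fin.sum_univ_two, Matrix.transpose, Matrix.vecHead, Matrix.vecTail]

lemma S_orth : Sᵀ * S = 1 := by
  ext i j; fin_cases i <;> fin_cases j <;>
    simp [S, Matrix.mul_apply, Fin.sum_univ_two, Matrix.transpose, Matrix.vecHead, Matrix.vecTail]

lemma comm_JK : J * K * Jᵀ * Kᵀ = -1 := by
  ext i j; fin_cases i <;> fin_cases j <;>
    simp [J, K, Matrix.mul_apply, Fin.sum_univ_two, Matrix.transpose, Matrix.vecHead,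
      Matrix.vecTail]

lemma comm_KJ : K * J * Kᵀ * Jᵀ = -1 := by
  ext i j; fin_cases i <;> fin_cases j <;>
    simp [J, K, Matrix.mul_apply, Fin.sum_univ_two, Matrix.transpose, Matrix.vecHead,
      Matrix.vecTail]

lemma comm_SK : S * K * Sᵀ * Kᵀ = -1 := by
  ext i j; fin_cases i <;> fin_cases j <;>
    simp [S, K, Matrix.mul_apply, Fin.sum_univ_two, Matrix.transpose, Matrix.vecHead,
      Matrix.vecTail]

lemma J_det : J.det = 1 := by simp [J, Matrix.det_fin_two_of]
lemma K_det : K.det = -1 := by simp [K, Matrix.det_fin_two_of]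
lemma S_det : S.det = -1 := by simp [S, Matrix.det_fin_two_of]

/-! ### Block diagonal assembly -/

noncomputable def big (m : ℕ) (f : Fin m → Matrix (Fin 2) (Fin 2) ℝ) :
    Matrix (Fin (2 * m)) (Fin (2 * m)) ℝ :=
  Matrix.reindex finProdFinEquiv finProdFinEquiv (Matrix.blockDiagonal f)

lemma big_mul (m : ℕ) (f g : Fin m → Matrix (Fin 2) (Fin 2) ℝ) :
    big m f * big m g = big m (fun k => f k * g k) := by
  simp only [big, Matrix.reindex_apply, Matrix.blockDiagonal_mul]
  exact Matrix.submatrix_mul_equiv _ _ _ _ _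

lemma big_transpose (m : ℕ) (f : Fin m → Matrix (Fin 2) (Fin 2) ℝ) :
    (big m f)ᵀ = big m (fun k => (f k)ᵀ) := by
  simp only [big, Matrix.transpose_reindex, Matrix.blockDiagonal_transpose]

lemma big_det (m : ℕ) (f : Fin m → Matrix (Fin 2) (Fin 2) ℝ) :
    (big m f).det = ∏ k : Fin m, (f k).det := by
  simp [big, Matrix.det_reindex_self, Matrix.det_blockDiagonal]

lemma big_one (m : ℕ) : big m (fun _ => 1) = 1 := by
  have h : (fun _ : Fin m => (1 : Matrix (Fin 2) (Fin 2) ℝ)) = 1 := rfl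
  rw [big, h, Matrix.blockDiagonal_one]
  simp

lemma big_neg_one (m : ℕ) : big m (fun _ => -1) = -1 := by
  rw [big]
  have h : (fun _ : Fin m => (-1 : Matrix (Fin 2) (Fin 2) ℝ))
      = -(fun _ : Fin m => (1 : Matrix (Fin 2) (Fin 2) ℝ)) := rfl
  rw [h, Matrix.blockDiagonal_neg]
  have h1 : (fun _ : Fin m => (1 : Matrix (Fin 2) (Fin 2) ℝ)) = 1 := rfl
  rw [h1, Matrix.blockDiagonal_one]
  simp [Matrix.reindex_apply, Matrix.submatrix_neg]

lemma big_orth (m : ℕ) (f : Fin m → Matrix (Fin 2) (Fin 2) ℝ)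
    (hf : ∀ k, (f k)ᵀ * f k = 1) : (big m f)ᵀ * big m f = 1 := by
  rw [big_transpose, big_mul]
  have : (fun k => (f k)ᵀ * f k) = (fun _ : Fin m => (1 : Matrix (Fin 2) (Fin 2) ℝ)) := by
    funext k; exact hf k
  rw [this, big_one]

/-- Product formula for the determinants of our block functions. -/
lemma prod_det (m' : ℕ) (x y z : Matrix (Fin 2) (Fin 2) ℝ) :
    (∏ k : Fin (m' + 2),
        (if (k : ℕ) = 0 then x else if (k : ℕ) = 1 then y else z).det)
      = z.det ^ m' * y.det * x.det := by
  have h := Fin.prod_univ_eq_prod_range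
    (fun j => (if j = 0 then x else if j = 1 then y else z).det) (m' + 2)
  rw [h, Finset.prod_range_succ', Finset.prod_range_succ']
  simp [Finset.prod_const]

/-- The main two-matrix construction for `δ = -1`. -/
lemma pair_neg (m' : ℕ) (a₀ b₀ a₁ b₁ : Matrix (Fin 2) (Fin 2) ℝ)
    (ha₀ : a₀ᵀ * a₀ = 1) (hb₀ : b₀ᵀ * b₀ = 1) (ha₁ : a₁ᵀ * a₁ = 1) (hb₁ : b₁ᵀ * b₁ = 1)
    (hc₀ : a₀ * b₀ * a₀ᵀ * b₀ᵀ = -1) (hc₁ : a₁ * b₁ * a₁ᵀ * b₁ᵀ = -1) :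
    ∃ A B : Matrix (Fin (2 * (m' + 2))) (Fin (2 * (m' + 2))) ℝ,
      Aᵀ * A = 1 ∧ Bᵀ * B = 1 ∧
      A.det = (-1 : ℝ) ^ m' * a₁.det * a₀.det ∧
      B.det = (-1 : ℝ) ^ m' * b₁.det * b₀.det ∧
      A * B * A⁻¹ * B⁻¹ = -1 := by
  set m := m' + 2 with hm
  set fa : Fin m → Matrix (Fin 2) (Fin 2) ℝ :=
    fun k => if (k : ℕ) = 0 then a₀ else if (k : ℕ) = 1 then a₁ else S with hfa
  set fb : Fin m → Matrix (Fin 2) (Fin 2) ℝ :=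
    fun k => if (k : ℕ) = 0 then b₀ else if (k : ℕ) = 1 then b₁ else K with hfb
  have hfao : ∀ k, (fa k)ᵀ * fa k = 1 := by
    intro k; rw [hfa]; dsimp only; split_ifs <;> [exact ha₀; exact ha₁; exact S_orth]
  have hfbo : ∀ k, (fb k)ᵀ * fb k = 1 := by
    intro k; rw [hfb]; dsimp only; split_ifs <;> [exact hb₀; exact hb₁; exact K_orth]
  have hAo : (big m fa)ᵀ * big m fa = 1 := big_orth m fa hfao
  have hBo : (big m fb)ᵀ * big m fb = 1 := big_orth m fb hfbo
  refine ⟨big m fa, big m fb, hAo, hBo, ?_, ?_, ?_⟩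
  · rw [big_det]
    have : ∀ k : Fin m, (fa k).det
        = (if (k : ℕ) = 0 then a₀ else if (k : ℕ) = 1 then a₁ else S).det := by
      intro k; rw [hfa]
    rw [Finset.prod_congr rfl (fun k _ => this k), prod_det, S_det]
  · rw [big_det]
    have : ∀ k : Fin m, (fb k).det
        = (if (k : ℕ) = 0 then b₀ else if (k : ℕ) = 1 then b₁ else K).det := by
      intro k; rw [hfb]
    rw [Finset.prod_congr rfl (fun k _ => this k), prod_det, K_det]
  · rw [Matrix.inv_eq_left_inv hAo, Matrix.inv_eq_left_inv hBo,
      big_transpose, big_transpose, big_mul, big_mul, big_mul]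
    have : (fun k => fa k * fb k * (fa k)ᵀ * (fb k)ᵀ)
        = (fun _ : Fin m => (-1 : Matrix (Fin 2) (Fin 2) ℝ)) := by
      funext k
      rw [hfa, hfb]; dsimp only
      split_ifs <;> [exact hc₀; exact hc₁; exact comm_SK]
    rw [this, big_neg_one]

/-- The two-matrix construction realizing any signs. -/
lemma pair (n : ℕ) (hn4 : 4 ≤ n) (hn : Even n) (e₀ e₁ δ : ℝ)
    (he₀ : e₀ = 1 ∨ e₀ = -1) (he₁ : e₁ = 1 ∨ e₁ = -1) (hδ : δ = 1 ∨ δ = -1) :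
    ∃ A B : Matrix (Fin n) (Fin n) ℝ,
      Aᵀ * A = 1 ∧ Bᵀ * B = 1 ∧ A.det = e₀ ∧ B.det = e₁ ∧
      A * B * A⁻¹ * B⁻¹ = δ • (1 : Matrix (Fin n) (Fin n) ℝ) := by
  have hn0 : 0 < n := by omega
  have he₀sq : e₀ * e₀ = 1 := by rcases he₀ with h | h <;> rw [h] <;> norm_num
  have he₁sq : e₁ * e₁ = 1 := by rcases he₁ with h | h <;> rw [h] <;> norm_num
  rcases hδ with hδ | hδ
  · -- δ = 1 : commuting diagonal matrices
    refine ⟨sd n e₀, sd n e₁, sd_orth n e₀ he₀sq, sd_orth n e₁ he₁sq,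
      sd_det n e₀ hn0, sd_det n e₁ hn0, ?_⟩
    rw [sd_commutator n e₀ e₁ he₀sq he₁sq, hδ, one_smul]
  · -- δ = -1 : block construction
    obtain ⟨m', rfl⟩ : ∃ m', n = 2 * (m' + 2) := by
      obtain ⟨k, hk⟩ := hn
      exact ⟨k - 2, by omega⟩
    have hδ1 : δ • (1 : Matrix (Fin (2 * (m' + 2))) (Fin (2 * (m' + 2))) ℝ) = -1 := by
      rw [hδ]; simp
    rw [hδ1]
    rcases Nat.even_or_odd m' with hpar | hpar
    · have ht : ((-1 : ℝ)) ^ m' = 1 := hpar.neg_one_pow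
      rcases he₀ with h0 | h0 <;> rcases he₁ with h1 | h1
      · obtain ⟨A, B, o1, o2, d1, d2, c⟩ := pair_neg m' S K S K S_orth K_orth S_orth K_orth
          comm_SK comm_SK
        exact ⟨A, B, o1, o2, by rw [d1, ht, h0]; norm_num [S_det, K_det, J_det],
          by rw [d2, ht, h1]; norm_num [S_det, K_det, J_det], c⟩
      · obtain ⟨A, B, o1, o2, d1, d2, c⟩ := pair_neg m' K J S K K_orth J_orth S_orth K_orth
          comm_KJ comm_SK
        exact ⟨A, B, o1, o2, by rw [d1, ht, h0]; norm_num [S_det, K_det, J_det],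
          by rw [d2, ht, h1]; norm_num [S_det, K_det, J_det], c⟩
      · obtain ⟨A, B, o1, o2, d1, d2, c⟩ := pair_neg m' J K S K J_orth K_orth S_orth K_orth
          comm_JK comm_SK
        exact ⟨A, B, o1, o2, by rw [d1, ht, h0]; norm_num [S_det, K_det, J_det],
          by rw [d2, ht, h1]; norm_num [S_det, K_det, J_det], c⟩
      · obtain ⟨A, B, o1, o2, d1, d2, c⟩ := pair_neg m' J K K J J_orth K_orth K_orth J_orth
          comm_JK comm_KJ
        exact ⟨A, B, o1, o2, by rw [d1, ht, h0]; norm_num [S_det, K_det, J_det],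
          by rw [d2, ht, h1]; norm_num [S_det, K_det, J_det], c⟩
    · have ht : ((-1 : ℝ)) ^ m' = -1 := hpar.neg_one_pow
      rcases he₀ with h0 | h0 <;> rcases he₁ with h1 | h1
      · obtain ⟨A, B, o1, o2, d1, d2, c⟩ := pair_neg m' J K K J J_orth K_orth K_orth J_orth
          comm_JK comm_KJ
        exact ⟨A, B, o1, o2, by rw [d1, ht, h0]; norm_num [S_det, K_det, J_det],
          by rw [d2, ht, h1]; norm_num [S_det, K_det, J_det], c⟩
      · obtain ⟨A, B, o1, o2, d1, d2, c⟩ := pair_neg m' J K S K J_orth K_orth S_orth K_orth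
          comm_JK comm_SK
        exact ⟨A, B, o1, o2, by rw [d1, ht, h0]; norm_num [S_det, K_det, J_det],
          by rw [d2, ht, h1]; norm_num [S_det, K_det, J_det], c⟩
      · obtain ⟨A, B, o1, o2, d1, d2, c⟩ := pair_neg m' K J S K K_orth J_orth S_orth K_orth
          comm_KJ comm_SK
        exact ⟨A, B, o1, o2, by rw [d1, ht, h0]; norm_num [S_det, K_det, J_det],
          by rw [d2, ht, h1]; norm_num [S_det, K_det, J_det], c⟩
      · obtain ⟨A, B, o1, o2, d1, d2, c⟩ := pair_neg m' S K S K S_orth K_orth S_orth K_orth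
          comm_SK comm_SK
        exact ⟨A, B, o1, o2, by rw [d1, ht, h0]; norm_num [S_det, K_det, J_det],
          by rw [d2, ht, h1]; norm_num [S_det, K_det, J_det], c⟩

end Stmt0Aux

open Stmt0Aux in
/-- For `n ≥ 4` even and `g ≥ 1`, any prescribed determinant signs
`ε₁, …, ε_{2g} ∈ {1, -1}` and any sign `δ ∈ {1, -1}` are realized by orthogonal
matrices `A₁, …, A_g, B₁, …, B_g ∈ O(n,ℝ)` with `det (A i) = ε_{2i-1}`,
`det (B i) = ε_{2i}` and `∏ [A_i, B_i] = δ • 1`. -/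
theorem stmt_0 (n g : ℕ) (hn4 : 4 ≤ n) (hn : Even n) (hg : 1 ≤ g)
    (ε : Fin (2 * g) → ℝ) (hε : ∀ i, ε i = 1 ∨ ε i = -1)
    (δ : ℝ) (hδ : δ = 1 ∨ δ = -1) :
    ∃ A B : Fin g → Matrix (Fin n) (Fin n) ℝ,
      (∀ i, (A i)ᵀ * A i = 1) ∧
      (∀ i, (B i)ᵀ * B i = 1) ∧
      (∀ i : Fin g, (A i).det = ε ⟨2 * i.val, by have := i.isLt; omega⟩) ∧
      (∀ i : Fin g, (B i).det = ε ⟨2 * i.val + 1, by have := i.isLt; omega⟩) ∧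
      (((List.finRange g).map
          (fun i => A i * B i * (A i)⁻¹ * (B i)⁻¹)).prod
        = δ • (1 : Matrix (Fin n) (Fin n) ℝ)) := by
  obtain ⟨g', rfl⟩ : ∃ g', g = g' + 1 := ⟨g - 1, by omega⟩
  have hn0 : 0 < n := by omega
  obtain ⟨A₀, B₀, hA₀, hB₀, hdA₀, hdB₀, hc₀⟩ :=
    pair n hn4 hn (ε ⟨0, by omega⟩) (ε ⟨1, by omega⟩) δ (hε _) (hε _) hδ
  set A : Fin (g' + 1) → Matrix (Fin n) (Fin n) ℝ :=
    fun i => if i = 0 then A₀ else sd n (ε ⟨2 * i.val, by have := i.isLt; omega⟩) with hA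
  set B : Fin (g' + 1) → Matrix (Fin n) (Fin n) ℝ :=
    fun i => if i = 0 then B₀ else sd n (ε ⟨2 * i.val + 1, by have := i.isLt; omega⟩) with hB
  have hsq : ∀ j : Fin (2 * (g' + 1)), ε j * ε j = 1 := by
    intro j; rcases hε j with h | h <;> rw [h] <;> norm_num
  refine ⟨A, B, ?_, ?_, ?_, ?_, ?_⟩
  · intro i
    rw [hA]; dsimp only
    split_ifs with hi
    · exact hA₀
    · exact sd_orth n _ (hsq _)
  · intro i
    rw [hB]; dsimp only
    split_ifs with hi
    · exact hB₀
    · exact sd_orth n _ (hsq _)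
  · intro i
    rw [hA]; dsimp only
    split_ifs with hi
    · subst hi; exact hdA₀
    · exact sd_det n _ hn0
  · intro i
    rw [hB]; dsimp only
    split_ifs with hi
    · subst hi; exact hdB₀
    · exact sd_det n _ hn0
  · rw [List.finRange_succ, List.map_cons, List.prod_cons, List.map_map]
    have htail : ((List.finRange g').map
        ((fun i => A i * B i * (A i)⁻¹ * (B i)⁻¹) ∘ Fin.succ)).prod = 1 := by
      apply List.prod_eq_one
      intro x hx
      simp only [List.mem_map, Function.comp_apply] at hx
      obtain ⟨j, _, rfl⟩ := hx
      have hj : (Fin.succ j : Fin (g' + 1)) ≠ 0 := Fin.succ_ne_zero j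
      rw [hA, hB]; dsimp only
      rw [if_neg hj, if_neg hj]
      exact sd_commutator n _ _ (hsq _) (hsq _)
    rw [htail, mul_one]
    have h0A : A 0 = A₀ := by simp [hA]
    have h0B : B 0 = B₀ := by simp [hB]
    rw [h0A, h0B]
    exact hc₀
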